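/- Let A = [[s,1],[0,s^{-1}]], B = [[s,0],[-y,s^{-1}]] over C[s^{\pm1},y] and for m >= 1 let S_m = I + BA^{-1} + ... + (BA^{-1})^{m-1}. Then det(S_{m+1}) = det(S_m) + tr(BA^{-1} + (BA^{-1})^2 + ... + (BA^{-1})^m) + 1, and the total degree of det(S_m) in s and y is m - 1. -/

import Mathlib

noncomputable section

/-- The ring of Laurent polynomials in `s` and ordinary polynomials in `y`
over `ℂ`, i.e. `ℂ[s^{±1}, y]`. -/
abbrev R2 : Type := AddMonoidAlgebra ℂ (ℤ × ℕ)

/-- The variable `s`. -/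
def s : R2 := AddMonoidAlgebra.single (1, 0) 1
/-- The inverse variable `s⁻¹`. -/
def sInv : R2 := AddMonoidAlgebra.single (-1, 0) 1
/-- The variable `y`. -/
def y : R2 := AddMonoidAlgebra.single (0, 1) 1

/-- `A = [[s,1],[0,s⁻¹]]`. -/
def A : Matrix (Fin 2) (Fin 2) R2 := !![s, 1; 0, sInv]
/-- `B = [[s,0],[-y,s⁻¹]]`. -/
def B : Matrix (Fin 2) (Fin 2) R2 := !![s, 0; -y, sInv]


/-- The total degree of a Laurent polynomial in `s` and `y`. -/
def deg (f : R2) : WithBot ℤ := f.coeff.support.sup fun p => ((p.1 + (p.2 : ℤ)) : WithBot ℤ)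

set_option linter.unreachableTactic false
set_option linter.unusedTactic false
set_option linter.unnecessarySeqFocus false

lemma hss : s * sInv = 1 := by
  simp [s, sInv, AddMonoidAlgebra.single_mul_single, ← AddMonoidAlgebra.one_def,
    Prod.mk_add_mk, Prod.mk_zero_zero]

lemma hAinv : A⁻¹ = !![sInv, -1; 0, s] := by
  apply Matrix.inv_eq_right_inv
  refine Matrix.ext fun i j => ?_
  fin_cases i <;> fin_cases j <;>
    simp [A, Matrix.mul_apply, Fin.sum_univ_two, Matrix.one_apply] <;>
    first | ring1 | linear_combination hss | linear_combination -hss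

/-- `M' = B A⁻¹`. -/
def M' : Matrix (Fin 2) (Fin 2) R2 := !![1, -s; -(sInv*y), y+1]

lemma hBA : B * A⁻¹ = M' := by
  rw [hAinv]
  refine Matrix.ext fun i j => ?_
  fin_cases i <;> fin_cases j <;>
    simp [B, M', Matrix.mul_apply, Fin.sum_univ_two] <;>
    first | ring1 | linear_combination hss | linear_combination -hss

lemma hM2 : M' * M' = (y + 2) • M' - 1 := by
  refine Matrix.ext fun i j => ?_
  fin_cases i <;> fin_cases j <;>
    simp [M', Matrix.mul_apply, Fin.sum_univ_two, Matrix.one_apply, smul_eq_mul] <;>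
    first | ring1 | linear_combination y * hss | linear_combination (-y) * hss

lemma hdetM : M'.det = 1 := by
  simp [M', Matrix.det_fin_two_of]
  first | linear_combination y * hss | linear_combination (-y) * hss

lemma det_comb (p q : R2) :
    (p • M' + q • (1 : Matrix (Fin 2) (Fin 2) R2)).det = p^2 + p*q*(y+2) + q^2 := by
  simp [M', Matrix.det_fin_two, Matrix.one_apply, smul_eq_mul]
  first | linear_combination (p^2*y) * hss | linear_combination (-(p^2*y)) * hss

lemma det_one_add (N : Matrix (Fin 2) (Fin 2) R2) :
    (1 + N).det = N.det + N.trace + 1 := by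
  simp [Matrix.det_fin_two, Matrix.trace_fin_two, Matrix.one_apply]
  ring

/-- the embedding `ℕ →+ ℤ × ℕ`. -/
def ι : ℕ →+ ℤ × ℕ where
  toFun k := ((0:ℤ), k)
  map_zero' := rfl
  map_add' a b := by simp [Prod.ext_iff]

lemma ι_inj : Function.Injective ι := fun a b h => by
  simpa [ι, Prod.ext_iff] using h

/-- the ring embedding `ℂ[X] →+* R2` sending `X` to `y`. -/
def ψ : Polynomial ℂ →+* R2 :=
  (AddMonoidAlgebra.mapDomainRingHom ℂ ι).comp (Polynomial.toFinsuppIso ℂ).toRingHom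

lemma psi_apply (P : Polynomial ℂ) : ψ P = AddMonoidAlgebra.mapDomain ι P.toFinsupp := rfl

lemma psiX : ψ Polynomial.X = y := by
  rw [psi_apply, Polynomial.toFinsupp_X, AddMonoidAlgebra.mapDomain_single]
  rfl

open Polynomial in
/-- coefficients of `S_n = c_n • M' + d_n • 1`. -/
def cd : ℕ → Polynomial ℂ × Polynomial ℂ
  | 0 => (0, 0)
  | n+1 => ((X+2) * (cd n).1 + (cd n).2, 1 - (cd n).1)

open Polynomial in
/-- the determinant of `S_n` as a polynomial in `y`. -/
def E (n : ℕ) : Polynomial ℂ := (cd n).1^2 + (cd n).1*(cd n).2*(X+2) + (cd n).2^2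

lemma hS : ∀ n, (∑ j ∈ Finset.range n, M' ^ j) =
    ψ (cd n).1 • M' + ψ (cd n).2 • (1 : Matrix (Fin 2) (Fin 2) R2)
  | 0 => by simp [cd]
  | (n+1) => by
    rw [geom_sum_succ, hS n]
    show _ = ψ ((Polynomial.X+2) * (cd n).1 + (cd n).2) • M' + ψ (1 - (cd n).1) • 1
    rw [map_add, map_mul, map_add, map_sub, map_one, psiX, map_ofNat]
    rw [mul_add, Matrix.mul_smul, Matrix.mul_smul, hM2, mul_one]
    module

lemma det_S (n : ℕ) : (∑ j ∈ Finset.range n, M' ^ j).det = ψ (E n) := by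
  rw [hS n, det_comb, E]
  simp [map_add, map_mul, map_pow, psiX, map_ofNat]

lemma deg_psi (P : Polynomial ℂ) (hP : P ≠ 0) :
    deg (ψ P) = ((P.natDegree : ℤ) : WithBot ℤ) := by
  rw [deg, psi_apply, AddMonoidAlgebra.coeff_mapDomain, Finsupp.mapDomain_support_of_injective ι_inj, Finset.sup_image]
  apply le_antisymm
  · refine Finset.sup_le fun k hk => ?_
    have : k ≤ P.natDegree := Polynomial.le_natDegree_of_mem_supp k hk
    show (((ι k).1 + ((ι k).2 : ℤ)) : WithBot ℤ) ≤ _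
    simp only [ι, AddMonoidHom.coe_mk, ZeroHom.coe_mk, zero_add]
    have h2 : (0:ℕ) + k ≤ P.natDegree := by omega
    exact_mod_cast h2
  · have h := Finset.le_sup
      (f := (fun p : ℤ × ℕ => ((p.1 + (p.2 : ℤ)) : WithBot ℤ)) ∘ ι)
      (Polynomial.natDegree_mem_support_of_nonzero hP)
    simpa [ι, Polynomial.toFinsupp_apply] using h

open Polynomial

lemma cd1 : cd 1 = (0, 1) := by norm_num [cd]
lemma cd2 : cd 2 = (1, 1) := by norm_num [cd]
lemma cd3 : cd 3 = (X + 3, 0) := by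
  have : cd 3 = ((X+2) * (cd 2).1 + (cd 2).2, 1 - (cd 2).1) := rfl
  rw [this, cd2, Prod.ext_iff]
  constructor <;> simp <;> ring

lemma cdeg : ∀ n : ℕ, ((cd (n+2)).1.Monic ∧ (cd (n+2)).1.degree = (n : WithBot ℕ)) ∧
    ((cd (n+3)).1.Monic ∧ (cd (n+3)).1.degree = ((n+1 : ℕ) : WithBot ℕ)) := by
  intro n
  induction n with
  | zero =>
    refine ⟨⟨?_, ?_⟩, ?_, ?_⟩
    · rw [show (cd 2).1 = 1 from by rw [cd2]]; exact monic_one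
    · rw [show (cd 2).1 = 1 from by rw [cd2]]; simp
    · rw [show (cd 3).1 = X + 3 from by rw [cd3]]; monicity!
    · rw [show (cd 3).1 = X + 3 from by rw [cd3]]; compute_degree!
  | succ n ih =>
    obtain ⟨⟨hm2, hd2⟩, hm3, hd3⟩ := ih
    refine ⟨⟨hm3, by exact_mod_cast hd3⟩, ?_, ?_⟩ <;>
    · have hc4 : (cd (n+4)).1 = (X+2) * (cd (n+3)).1 + (1 - (cd (n+2)).1) := rfl
      have hX2 : ((X : ℂ[X]) + 2).degree = 1 := by compute_degree!
      have hX2m : ((X : ℂ[X]) + 2).Monic := by monicity!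
      have hdP : ((X+2) * (cd (n+3)).1).degree = ((n+2 : ℕ) : WithBot ℕ) := by
        rw [degree_mul, hX2, hd3]; norm_cast; omega
      have hlt : (1 - (cd (n+2)).1).degree < ((X+2) * (cd (n+3)).1).degree := by
        rw [hdP]
        refine lt_of_le_of_lt (le_trans (degree_sub_le _ _) (max_le ?_ (le_of_eq hd2))) ?_
        · rw [degree_one]; exact_mod_cast Nat.zero_le n
        · exact_mod_cast by omega
      first
      | exact (show (cd (n+4)).1.Monic from hc4 ▸ (hX2m.mul hm3).add_of_left hlt)
      | rw [show ((n+1:ℕ)+1 : ℕ) = n+2 from rfl, hc4,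
          degree_add_eq_left_of_degree_lt hlt, hdP]

lemma Erec (n : ℕ) : E (n+1) = E n + ((X+2)^2 - 2) * (cd n).1 + (X+2) * (cd n).2 + 1 := by
  show ((X+2) * (cd n).1 + (cd n).2)^2 +
      ((X+2) * (cd n).1 + (cd n).2) * (1 - (cd n).1) * (X+2) + (1 - (cd n).1)^2 = _
  rw [E]; ring

lemma Edeg : ∀ n : ℕ, (E (n+3)).Monic ∧ (E (n+3)).degree = ((n+2 : ℕ) : WithBot ℕ) := by
  intro n
  induction n with
  | zero =>
    have h3 : E 3 = (X+3)^2 := by rw [E, cd3]; ring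
    rw [h3]
    constructor
    · monicity!
    · compute_degree!
  | succ n ih =>
    have hE : E (n+4) = ((X+2)^2 - 2) * (cd (n+3)).1 +
        (E (n+3) + ((X+2) * (cd (n+3)).2 + 1)) := by
      rw [show n+4 = (n+3)+1 from rfl, Erec (n+3)]; ring
    have hTm : (((X:ℂ[X])+2)^2 - 2).Monic := by monicity!
    have hTd : (((X:ℂ[X])+2)^2 - 2).degree = 2 := by compute_degree!
    have hdP : ((((X:ℂ[X])+2)^2 - 2) * (cd (n+3)).1).degree = ((n+3 : ℕ) : WithBot ℕ) := by
      rw [degree_mul, hTd, (cdeg n).2.2]; norm_cast; omega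
    have tail_le : (E (n+3) + ((X+2) * (cd (n+3)).2 + 1)).degree
        ≤ ((n+2 : ℕ) : WithBot ℕ) := by
      refine le_trans (degree_add_le _ _) (max_le (le_of_eq ih.2) ?_)
      refine le_trans (degree_add_le _ _) (max_le ?_ ?_)
      · have hd : (cd (n+3)).2.degree ≤ (n : WithBot ℕ) := by
          have h : (cd (n+3)).2 = 1 - (cd (n+2)).1 := rfl
          rw [h]
          refine le_trans (degree_sub_le _ _) (max_le ?_ (le_of_eq (cdeg n).1.2))
          rw [degree_one]; exact_mod_cast Nat.zero_le n
        have hX2 : ((X : ℂ[X]) + 2).degree = 1 := by compute_degree!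
        calc ((X+2) * (cd (n+3)).2).degree ≤ ((X:ℂ[X])+2).degree + (cd (n+3)).2.degree :=
              degree_mul_le _ _
          _ ≤ 1 + (n : WithBot ℕ) := by rw [hX2]; exact add_le_add_right hd 1
          _ ≤ ((n+2 : ℕ) : WithBot ℕ) := by exact_mod_cast by omega
      · rw [degree_one]; exact_mod_cast Nat.zero_le (n+2)
    have hlt : (E (n+3) + ((X+2) * (cd (n+3)).2 + 1)).degree
        < ((((X:ℂ[X])+2)^2 - 2) * (cd (n+3)).1).degree := by
      rw [hdP]; exact lt_of_le_of_lt tail_le (by exact_mod_cast by omega)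
    constructor
    · exact hE ▸ (hTm.mul (cdeg n).2.1).add_of_left hlt
    · rw [show ((n+1)+2 : ℕ) = n+3 from rfl, hE,
        degree_add_eq_left_of_degree_lt hlt, hdP]

lemma Emain : ∀ m : ℕ, 1 ≤ m → (E m).Monic ∧ (E m).degree = ((m - 1 : ℕ) : WithBot ℕ)
  | 1, _ => by
    have h : E 1 = 1 := by rw [E, cd1]; ring
    rw [h]
    exact ⟨monic_one, by simp⟩
  | 2, _ => by
    have h : E 2 = X + 4 := by rw [E, cd2]; ring
    rw [h]
    exact ⟨by monicity!, by compute_degree!⟩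
  | (n+3), _ => by simpa using Edeg n

open Finset in
/-- For `S_m = I + BA⁻¹ + ⋯ + (BA⁻¹)^{m-1}` one has
`det S_{m+1} = det S_m + tr(BA⁻¹ + ⋯ + (BA⁻¹)^m) + 1`, and `det S_m` has total degree
`m - 1` in `s` and `y`. -/
theorem stmt_19 (m : ℕ) (hm : 1 ≤ m) :
    (∑ j ∈ range (m + 1), (B * A⁻¹) ^ j).det =
      (∑ j ∈ range m, (B * A⁻¹) ^ j).det +
        (∑ j ∈ Icc 1 m, (B * A⁻¹) ^ j).trace + 1 ∧
    deg ((∑ j ∈ range m, (B * A⁻¹) ^ j).det) = ((m : ℤ) - 1 : ℤ) := by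
  rw [hBA]
  constructor
  · have hIcc : (∑ j ∈ Finset.Icc 1 m, M' ^ j) = M' * ∑ j ∈ Finset.range m, M' ^ j := by
      rw [Finset.mul_sum, ← Finset.Ico_add_one_right_eq_Icc, Finset.sum_Ico_eq_sum_range]
      simp [pow_add]
    rw [geom_sum_succ,
      show (M' * ∑ j ∈ Finset.range m, M' ^ j) + 1
          = 1 + M' * ∑ j ∈ Finset.range m, M' ^ j from add_comm _ _,
      det_one_add, hIcc, Matrix.det_mul, hdetM, one_mul]
  · rw [det_S, deg_psi (E m) (Emain m hm).1.ne_zero,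
      natDegree_eq_of_degree_eq_some (Emain m hm).2,
      show ((m - 1 : ℕ) : ℤ) = (m:ℤ) - 1 from by omega]
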